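/- Let 0 < μ_1 < μ_2 < ... < μ_k. Define the k×k lower-triangular matrices A_k with entries A_{k:i}^{l} = ∏_{t=1}^{l-1}(μ_i - μ_t) for l ≤ i and 0 otherwise, and B_k with entries B_{k:l}^{i} = 1/∏_{t=1, t≠i}^{l}(μ_i - μ_t) for i ≤ l and 0 otherwise. Then B_k A_k = I, i.e., B_k is the inverse of A_k. -/

import Mathlib

/-- The lower-triangular matrix `A_k`: `A_{k:i}^l = ∏_{t=1}^{l-1}(μ_i - μ_t)`
for `l ≤ i` and `0` otherwise (indices `0`-based here: row `i`, column `l`). -/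
noncomputable def Amat (k : ℕ) (μ : Fin k → ℝ) : Matrix (Fin k) (Fin k) ℝ :=
  fun i l =>
    if (l : ℕ) ≤ (i : ℕ) then
      ∏ t ∈ Finset.univ.filter (fun t : Fin k => (t : ℕ) < (l : ℕ)), (μ i - μ t)
    else 0

/-- The lower-triangular matrix `B_k`: `B_{k:l}^i = 1/∏_{t=1,t≠i}^{l}(μ_i - μ_t)`
for `i ≤ l` and `0` otherwise (row `l`, column `i`). -/
noncomputable def Bmat (k : ℕ) (μ : Fin k → ℝ) : Matrix (Fin k) (Fin k) ℝ :=
  fun l i =>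
    if (i : ℕ) ≤ (l : ℕ) then
      1 / ∏ t ∈ (Finset.univ.filter (fun t : Fin k => (t : ℕ) ≤ (l : ℕ))).erase i, (μ i - μ t)
    else 0

open Polynomial Finset

/-- For `0 < μ_1 < … < μ_k`, the matrices `B_k` and `A_k` are mutually inverse:
`B_k A_k = I`. -/
theorem Bmat_mul_Amat (k : ℕ) (μ : Fin k → ℝ) (hμ : StrictMono μ)
    (hpos : ∀ i, 0 < μ i) :
    Bmat k μ * Amat k μ = 1 := by
  have hinj : Function.Injective μ := hμ.injective
  ext l j
  rw [Matrix.mul_apply, Matrix.one_apply]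
  have hfiltIic : Finset.univ.filter (fun t : Fin k => (t : ℕ) ≤ (l : ℕ)) = Finset.Iic l := by
    ext t
    simp only [Finset.mem_filter, Finset.mem_univ, true_and, Finset.mem_Iic, Fin.le_def]
  have hfiltIio : Finset.univ.filter (fun t : Fin k => (t : ℕ) < (j : ℕ)) = Finset.Iio j := by
    ext t
    simp only [Finset.mem_filter, Finset.mem_univ, true_and, Finset.mem_Iio, Fin.lt_def]
  set s : Finset (Fin k) := Finset.Iic l with hs
  have hcard : s.card = (l : ℕ) + 1 := Fin.card_Iic l
  have hinjOn : Set.InjOn μ s := fun a _ b _ h => hinj h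
  set P : Polynomial ℝ := ∏ t ∈ Finset.Iio j, (X - C (μ t)) with hP
  have hPdeg : P.natDegree = (j : ℕ) := by
    rw [hP, natDegree_prod _ _ (fun t _ => X_sub_C_ne_zero (μ t))]
    simp [Fin.card_Iio]
  have hPne : P ≠ 0 := by
    rw [hP]; exact prod_ne_zero_iff.mpr fun t _ => X_sub_C_ne_zero (μ t)
  have hevalzero : ∀ i : Fin k, (i : ℕ) < (j : ℕ) → P.eval (μ i) = 0 := by
    intro i hij
    rw [hP, eval_prod]
    have hmem : i ∈ Finset.Iio j := Finset.mem_Iio.mpr (Fin.lt_def.mpr hij)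
    exact Finset.prod_eq_zero hmem (by simp)
  -- termwise identity
  have hterm : ∀ i : Fin k, Bmat k μ l i * Amat k μ i j =
      if i ∈ s then P.eval (μ i) * (∏ t ∈ s.erase i, (μ i - μ t))⁻¹ else 0 := by
    intro i
    by_cases hi : (i : ℕ) ≤ (l : ℕ)
    · have his : i ∈ s := Finset.mem_Iic.mpr (Fin.le_def.mpr hi)
      rw [if_pos his, Bmat, Amat, if_pos hi, hfiltIic]
      by_cases hji : (j : ℕ) ≤ (i : ℕ)
      · rw [if_pos hji]
        have : P.eval (μ i) = ∏ t ∈ Finset.Iio j, (μ i - μ t) := by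
          simp [hP, eval_prod]
        rw [this, ← hfiltIio]
        ring
      · rw [if_neg hji, mul_zero, hevalzero i (lt_of_not_ge hji), zero_mul]
    · have his : i ∉ s := fun h => hi (Fin.le_def.mp (Finset.mem_Iic.mp h))
      rw [if_neg his, Bmat, if_neg hi, zero_mul]
  rw [Finset.sum_congr rfl fun i _ => hterm i, Finset.sum_ite_mem,
    Finset.univ_inter]
  by_cases hjl : (j : ℕ) ≤ (l : ℕ)
  · -- the sum equals the coefficient of X^l in P
    have hbasis : ∀ i ∈ s, (Lagrange.basis s μ i).coeff (l : ℕ) =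
        (∏ t ∈ s.erase i, (μ i - μ t))⁻¹ := by
      intro i hi
      have hdeg : (Lagrange.basis s μ i).natDegree = (l : ℕ) := by
        rw [Lagrange.natDegree_basis hinjOn hi, hcard]; simp
      rw [← hdeg, coeff_natDegree]
      unfold Lagrange.basis
      rw [leadingCoeff_prod, ← Finset.prod_inv_distrib]
      refine Finset.prod_congr rfl fun t ht => ?_
      rw [Lagrange.basisDivisor, leadingCoeff_mul, leadingCoeff_C,
        (monic_X_sub_C (μ t)).leadingCoeff, mul_one]
    have hsum : ∑ i ∈ s, P.eval (μ i) * (∏ t ∈ s.erase i, (μ i - μ t))⁻¹ =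
        P.coeff (l : ℕ) := by
      have hdlt : P.degree < s.card := by
        rw [hcard, degree_eq_natDegree hPne, hPdeg]
        exact_mod_cast Nat.lt_succ_of_le hjl
      conv_rhs => rw [Lagrange.eq_interpolate hinjOn hdlt]
      rw [Lagrange.interpolate_apply, finset_sum_coeff]
      refine (Finset.sum_congr rfl fun i hi => ?_).symm
      rw [coeff_C_mul, hbasis i hi]
    rw [hsum]
    by_cases hlj : l = j
    · subst hlj
      rw [if_pos rfl, ← hPdeg, coeff_natDegree]
      exact monic_prod_of_monic _ _ (fun t _ => monic_X_sub_C (μ t))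
    · rw [if_neg hlj]
      have hlt : (j : ℕ) < (l : ℕ) :=
        lt_of_le_of_ne hjl (fun h => hlj (Fin.ext h.symm))
      exact coeff_eq_zero_of_natDegree_lt (by rw [hPdeg]; exact hlt)
  · -- j > l : every term vanishes and l ≠ j
    have hlj : l ≠ j := fun h => hjl (le_of_eq (congrArg Fin.val h.symm))
    rw [if_neg hlj]
    refine Finset.sum_eq_zero fun i hi => ?_
    have hil : (i : ℕ) ≤ (l : ℕ) := Fin.le_def.mp (Finset.mem_Iic.mp hi)
    rw [hevalzero i (lt_of_le_of_lt hil (lt_of_not_ge hjl)), zero_mul]
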